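/- Let N = \mathbb{Z}^2 + \mathbb{Z}\cdot(\tfrac13,\tfrac13) \subset \mathbb{Q}^2, and let H be the \mathbb{Q}-algebra that is free as a \mathbb{Q}-module on basis \{y_b : b \in N\}, with bilinear multiplication y_b \cdot y_{b'} = y_{b+b'} if b and b' lie in a common one of the three closed cones C_{12} = \mathrm{cone}((1,0),(0,1)), C_{23} = \mathrm{cone}((0,1),(-1,-1)), C_{13} = \mathrm{cone}((-1,-1),(1,0)) of \mathbb{Q}^2, and y_b \cdot y_{b'} = 0 otherwise. Set u_1 = y_{(1,0)}, u_2 = y_{(0,1)}, u_3 = y_{(-1/3,-1/3)}. Let I be the formal series in H((z^{-1}))[[Q, x_0, x_1, t_1, t_2, t_3]] given by I = z \exp((u_1 t_1 + u_2 t_2 + u_3 t_3)/z) \sum_{(l,k_0,k_1) \in \mathbb{N}^3} \frac{Q^l x_0^{k_0} x_1^{k_1} e^{(t_1+t_2+3t_3)l}}{z^{k_0+k_1} k_0! k_1!}\, F(l,k_1)\, \prod_{b=1}^{l}(u_3+bz)^{-1}\, y_{c(l,k_1)}, where F(l,k_1) = \prod_{(l-k_1)/3 < b \le 0} (u_1+bz)(u_2+bz)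 if l \le k_1 and F(l,k_1) = \prod_{0 < b \le (l-k_1)/3} \big((u_1+bz)(u_2+bz)\big)^{-1} if l \ge k_1, the products over b running over rationals with b - (l-k_1)/3 \in \mathbb{Z}, and c(l,k_1) = \langle (k_1-l)/3 \rangle \cdot (1,1) \in N with \langle \cdot \rangle the fractional part. Then the coefficient of z^k in I vanishes for every k \ge 2, the coefficient of z^1 equals 1 = y_{(0,0)}, and the coefficient of z^0 equals t_1 u_1 + t_2 u_2 + t_3 u_3 + x_0 + x_1 y_{(1/3,1/3)}. -/

import Mathlib

open Finset

noncomputable section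

/-- The lattice `N = ℤ² + ℤ·(1/3,1/3) ⊂ ℚ²`, i.e. the subgroup of `ℚ²` generated by
`(1,0)`, `(0,1)` and `(1/3,1/3)`. -/
def NL : AddSubgroup (ℚ × ℚ) :=
  AddSubgroup.closure {((1 : ℚ), (0 : ℚ)), ((0 : ℚ), (1 : ℚ)), ((1/3 : ℚ), (1/3 : ℚ))}

lemma mem10 : ((1 : ℚ), (0 : ℚ)) ∈ NL := AddSubgroup.subset_closure (by simp)
lemma mem01 : ((0 : ℚ), (1 : ℚ)) ∈ NL := AddSubgroup.subset_closure (by simp)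
lemma mem13 : ((1/3 : ℚ), (1/3 : ℚ)) ∈ NL := AddSubgroup.subset_closure (by simp)

/-- `(1,0) ∈ N`, indexing `u₁ = y_{(1,0)}`. -/
def b₁ : NL := ⟨((1 : ℚ), (0 : ℚ)), mem10⟩
/-- `(0,1) ∈ N`, indexing `u₂ = y_{(0,1)}`. -/
def b₂ : NL := ⟨((0 : ℚ), (1 : ℚ)), mem01⟩
/-- `(1/3,1/3) ∈ N`, indexing the twisted-sector unit `y_{(1/3,1/3)}`. -/
def bT : NL := ⟨((1/3 : ℚ), (1/3 : ℚ)), mem13⟩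
/-- `(-1/3,-1/3) ∈ N`, indexing `u₃ = y_{(-1/3,-1/3)}`. -/
def b₃ : NL := -bT

/-- The closed cone spanned by `v` and `w` in `ℚ²`. -/
def cone2 (v w : ℚ × ℚ) : Set (ℚ × ℚ) :=
  {p | ∃ a c : ℚ, 0 ≤ a ∧ 0 ≤ c ∧ p = a • v + c • w}

/-- The three maximal cones `C₁₂ = cone((1,0),(0,1))`, `C₂₃ = cone((0,1),(-1,-1))`,
`C₁₃ = cone((-1,-1),(1,0))` of the fan of `ℙ(1,1,3)`. -/
def cones : Set (Set (ℚ × ℚ)) :=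
  {cone2 ((1 : ℚ), (0 : ℚ)) ((0 : ℚ), (1 : ℚ)),
    cone2 ((0 : ℚ), (1 : ℚ)) ((-1 : ℚ), (-1 : ℚ)),
    cone2 ((-1 : ℚ), (-1 : ℚ)) ((1 : ℚ), (0 : ℚ))}

/-- The box element `c(l,k₁) = ⟨(k₁-l)/3⟩·(1,1) = ((k₁-l) mod 3) • (1/3,1/3) ∈ N`. -/
def cElt (l k₁ : ℕ) : NL := (((k₁ : ℤ) - (l : ℤ)) % 3) • bT

variable (H : Type*) [CommRing H] [Algebra ℚ H]

/-- The element `z` of `H((z⁻¹)) = LaurentSeries H` (Laurent series in `w = z⁻¹`,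
so `z = w⁻¹` is the single series with exponent `-1`). -/
def zz : LaurentSeries H := HahnSeries.single (-1 : ℤ) 1

/-- The element `z⁻¹` of `H((z⁻¹))`. -/
def zinv : LaurentSeries H := HahnSeries.single (1 : ℤ) 1

/-- `F(l,k₁)`: if `l ≤ k₁` it is `∏_b (u₁+bz)(u₂+bz)`, the product over rationals `b`
with `(l-k₁)/3 < b ≤ 0` and `b - (l-k₁)/3 ∈ ℤ` (i.e. `b = (l-k₁)/3 + j`,
`j = 1, …, ⌊(k₁-l)/3⌋`); if `l ≥ k₁` it is `∏_b ((u₁+bz)(u₂+bz))⁻¹`, the product over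
rationals `b` with `0 < b ≤ (l-k₁)/3` and `b - (l-k₁)/3 ∈ ℤ` (i.e. `b = (l-k₁)/3 - j`,
`j = 0, …, ⌈(l-k₁)/3⌉ - 1`). -/
def Ffac (y : NL → H) (l k : ℕ) : LaurentSeries H :=
  if l ≤ k then
    ∏ j ∈ Finset.range ((k - l) / 3),
      ((HahnSeries.C (y b₁) + ((((l : ℚ) - (k : ℚ)) / 3) + ((j : ℚ) + 1)) • zz H) *
        (HahnSeries.C (y b₂) + ((((l : ℚ) - (k : ℚ)) / 3) + ((j : ℚ) + 1)) • zz H))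
  else
    ∏ j ∈ Finset.range ((l - k + 2) / 3),
      Ring.inverse
        ((HahnSeries.C (y b₁) + ((((l : ℚ) - (k : ℚ)) / 3) - (j : ℚ)) • zz H) *
          (HahnSeries.C (y b₂) + ((((l : ℚ) - (k : ℚ)) / 3) - (j : ℚ)) • zz H))

/-- The `S`-extended `I`-function of `ℙ(1,1,3)` as an element of
`H((z⁻¹))[[Q, x₀, x₁, t₁, t₂, t₃]]` (variables `0 ↦ Q`, `1 ↦ x₀`, `2 ↦ x₁`, `3 ↦ t₁`,
`4 ↦ t₂`, `5 ↦ t₃`), given by its coefficients: the coefficient of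
`Q^l x₀^{k₀} x₁^{k₁} t₁^{a₁} t₂^{a₂} t₃^{a₃}` in
`z exp((u₁t₁+u₂t₂+u₃t₃)/z) ∑_{(l,k₀,k₁)} Q^l x₀^{k₀} x₁^{k₁} e^{(t₁+t₂+3t₃)l}
  /(z^{k₀+k₁}k₀!k₁!) F(l,k₁) (∏_{b=1}^{l}(u₃+bz)⁻¹) y_{c(l,k₁)}`,
namely `z (u₁/z + l)^{a₁}(u₂/z + l)^{a₂}(u₃/z + 3l)^{a₃}/(a₁!a₂!a₃! z^{k₀+k₁} k₀!k₁!)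
F(l,k₁) (∏_{b=1}^l (u₃+bz)⁻¹) y_{c(l,k₁)}`, where `u₁ = y_{(1,0)}`, `u₂ = y_{(0,1)}`,
`u₃ = y_{(-1/3,-1/3)}`. -/
def Ifun (y : NL → H) : MvPowerSeries (Fin 6) (LaurentSeries H) := fun m =>
  let l := m 0; let k₀ := m 1; let k₁ := m 2; let a₁ := m 3; let a₂ := m 4; let a₃ := m 5
  (algebraMap ℚ (LaurentSeries H)
      (((k₀.factorial * k₁.factorial *
          a₁.factorial * a₂.factorial * a₃.factorial : ℕ) : ℚ)⁻¹)) *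
    zz H * zinv H ^ (k₀ + k₁) *
    ((HahnSeries.C (y b₁) : LaurentSeries H) * zinv H + (l : LaurentSeries H)) ^ a₁ *
    ((HahnSeries.C (y b₂) : LaurentSeries H) * zinv H + (l : LaurentSeries H)) ^ a₂ *
    ((HahnSeries.C (y b₃) : LaurentSeries H) * zinv H + ((3 * l : ℕ) : LaurentSeries H)) ^ a₃ *
    Ffac H y l k₁ *
    (∏ j ∈ Finset.range l, Ring.inverse ((HahnSeries.C (y b₃) : LaurentSeries H) + ((j : ℚ) + 1) • zz H)) *
    (HahnSeries.C (y (cElt l k₁)) : LaurentSeries H)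

/-- The coefficient of `z^k` in a series in `H((z⁻¹))[[Q,x,t]]`, as an element of
`H[[Q,x,t]]`. -/
def zCoeff (I : MvPowerSeries (Fin 6) (LaurentSeries H)) (k : ℤ) :
    MvPowerSeries (Fin 6) H := fun m =>
  (MvPowerSeries.coeff m I).coeff (-k)

-- ===================== auxiliary machinery =====================
set_option linter.unusedSectionVars false

namespace IAux

variable {H}

/-- coefficients vanish below `n` -/
def lbd (f : LaurentSeries H) (n : ℤ) : Prop := ∀ k : ℤ, k < n → f.coeff k = 0

lemma lbd_mono {f : LaurentSeries H} {a b : ℤ} (h : b ≤ a) (hf : lbd f a) : lbd f b :=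
  fun k hk => hf k (lt_of_lt_of_le hk h)

lemma lbd_single {a n : ℤ} (h : n ≤ a) (r : H) : lbd (HahnSeries.single a r) n :=
  fun k hk => HahnSeries.coeff_single_of_ne (by omega)

lemma lbd_C (r : H) : lbd (HahnSeries.C r : LaurentSeries H) 0 := by
  rw [HahnSeries.C_apply]; exact lbd_single le_rfl r

lemma lbd_one : lbd (1 : LaurentSeries H) 0 := by
  rw [← HahnSeries.single_zero_one]; exact lbd_single le_rfl 1

lemma lbd_natCast (n : ℕ) : lbd ((n : LaurentSeries H)) 0 := by
  rw [show ((n : LaurentSeries H)) = HahnSeries.C (n : H) by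
    rw [← map_natCast (HahnSeries.C (Γ := ℤ) (R := H)) n]]
  exact lbd_C _

lemma lbd_add {f g : LaurentSeries H} {a : ℤ} (hf : lbd f a) (hg : lbd g a) :
    lbd (f + g) a := fun k hk => by
  rw [HahnSeries.coeff_add, hf k hk, hg k hk, add_zero]

lemma lbd_smul {f : LaurentSeries H} {a : ℤ} (q : ℚ) (hf : lbd f a) : lbd (q • f) a :=
  fun k hk => by rw [HahnSeries.coeff_smul, hf k hk, smul_zero]

lemma lbd_mul {f g : LaurentSeries H} {a b : ℤ} (hf : lbd f a) (hg : lbd g b) :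
    lbd (f * g) (a + b) := by
  intro k hk
  rw [HahnSeries.coeff_mul]
  apply Finset.sum_eq_zero
  intro ij hij
  rw [Finset.mem_addAntidiagonal] at hij
  rcases lt_or_ge ij.1 a with h | h
  · rw [hf _ h, zero_mul]
  · rw [hg ij.2 (by omega), mul_zero]

lemma lbd_pow {f : LaurentSeries H} {a : ℤ} (n : ℕ) (hf : lbd f a) :
    lbd (f ^ n) ((n : ℤ) * a) := by
  induction n with
  | zero => simpa using lbd_one
  | succ n ih =>
      have h2 := lbd_mul ih hf
      rw [← pow_succ] at h2
      exact lbd_mono (by push_cast; ring_nf; omega) h2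

lemma lbd_prod {ι : Type*} (s : Finset ι) (f : ι → LaurentSeries H) (β : ι → ℤ)
    (h : ∀ i ∈ s, lbd (f i) (β i)) :
    lbd (∏ i ∈ s, f i) (∑ i ∈ s, β i) := by
  induction s using Finset.cons_induction with
  | empty => simpa using lbd_one
  | cons i s hi ih =>
      rw [Finset.prod_cons, Finset.sum_cons]
      exact lbd_mul (h i (Finset.mem_cons_self i s)) (ih fun j hj => h j (Finset.mem_cons_of_mem hj))

lemma zz_mul_zinv : (zz H) * zinv H = 1 := by
  rw [zz, zinv, HahnSeries.single_mul_single]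
  norm_num [HahnSeries.single_zero_one]

lemma lbd_ofPowerSeries (φ : PowerSeries H) :
    lbd (HahnSeries.ofPowerSeries ℤ H φ) 0 := by
  intro k hk
  rw [HahnSeries.ofPowerSeries_apply]
  apply HahnSeries.embDomain_notin_range
  rintro ⟨n, hn⟩
  change (n : ℤ) = k at hn
  omega

lemma lbd_algebraMap (q : ℚ) : lbd ((algebraMap ℚ (LaurentSeries H)) q) 0 := by
  rw [HahnSeries.algebraMap_apply']
  exact lbd_ofPowerSeries _

lemma smul_single (q : ℚ) (a : ℤ) (r : H) :
    q • (HahnSeries.single a r : LaurentSeries H) = HahnSeries.single a (q • r) := by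
  ext k
  rw [HahnSeries.coeff_smul]
  rcases eq_or_ne k a with rfl | h
  · rw [HahnSeries.coeff_single_same, HahnSeries.coeff_single_same]
  · rw [HahnSeries.coeff_single_of_ne h, HahnSeries.coeff_single_of_ne h, smul_zero]

lemma inverse_of_mul_eq_one {M₀ : Type*} [CommMonoidWithZero M₀] {a b : M₀}
    (h : a * b = 1) : Ring.inverse a = b := by
  obtain ⟨u, rfl⟩ := IsUnit.of_mul_eq_one b h
  rw [Ring.inverse_unit]
  exact Units.inv_eq_of_mul_eq_one_right h

/-- key inverse lemma -/
lemma lbd_inverse_linear (u : H) (b : ℚ) (hb : b ≠ 0) :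
    lbd (Ring.inverse (HahnSeries.C u + b • zz H) : LaurentSeries H) 1 := by
  have hau : IsUnit (algebraMap ℚ H b) := (Units.mk0 b hb).isUnit.map (algebraMap ℚ H)
  have hconst : PowerSeries.constantCoeff
      (PowerSeries.C (algebraMap ℚ H b) + PowerSeries.C u * PowerSeries.X) = (hau.unit : H) := by
    simp
  have hmulψ := PowerSeries.mul_invOfUnit
    (PowerSeries.C (algebraMap ℚ H b) + PowerSeries.C u * PowerSeries.X) hau.unit hconst
  have hfact : HahnSeries.C u + b • zz H
      = zz H * HahnSeries.ofPowerSeries ℤ H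
          (PowerSeries.C (algebraMap ℚ H b) + PowerSeries.C u * PowerSeries.X) := by
    rw [map_add, map_mul, HahnSeries.ofPowerSeries_C, HahnSeries.ofPowerSeries_C,
      HahnSeries.ofPowerSeries_X]
    rw [zz, smul_single, HahnSeries.C_apply, HahnSeries.C_apply,
      Algebra.algebraMap_eq_smul_one]
    rw [mul_add, HahnSeries.single_mul_single, ← mul_assoc, HahnSeries.single_mul_single,
      HahnSeries.single_mul_single]
    norm_num [add_comm]
  have hunit : (HahnSeries.C u + b • zz H) *
      (HahnSeries.ofPowerSeries ℤ H (PowerSeries.invOfUnit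
        (PowerSeries.C (algebraMap ℚ H b) + PowerSeries.C u * PowerSeries.X) hau.unit) *
        zinv H) = 1 := by
    rw [hfact]
    rw [show ∀ A B C D : LaurentSeries H, A * B * (C * D) = (A * D) * (B * C) from
      fun A B C D => by ring]
    rw [zz_mul_zinv, ← map_mul, hmulψ, map_one, one_mul]
  rw [inverse_of_mul_eq_one hunit]
  exact lbd_mono (le_of_eq (zero_add 1).symm)
    (lbd_mul (lbd_ofPowerSeries _) (lbd_single le_rfl 1))

lemma lbd_inverse_quad (u v : H) (c : ℚ) (hc : c ≠ 0) :
    lbd (Ring.inverse ((HahnSeries.C u + c • zz H) * (HahnSeries.C v + c • zz H)) :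
      LaurentSeries H) 2 := by
  rw [Ring.mul_inverse_rev]
  exact lbd_mono (le_of_eq (by norm_num))
    (lbd_mul (lbd_inverse_linear v c hc) (lbd_inverse_linear u c hc))



lemma lbd_zero (n : ℤ) : lbd (0 : LaurentSeries H) n := fun k _ => HahnSeries.coeff_zero

lemma lbd_zz : lbd (zz H) (-1) := by rw [zz]; exact lbd_single le_rfl 1

lemma lbd_zinv : lbd (zinv H) 1 := by rw [zinv]; exact lbd_single le_rfl 1

lemma lbd_linfac (u : H) (c : ℚ) : lbd (HahnSeries.C u + c • zz H) (-1) :=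
  lbd_add (lbd_mono (by norm_num) (lbd_C u)) (lbd_smul c lbd_zz)

def fB (l k : ℕ) : ℤ :=
  if l ≤ k then
    (if k - l = 3 * ((k - l) / 3) ∧ 1 ≤ (k - l) / 3 then 2 else 0) - 2 * (((k - l) / 3 : ℕ) : ℤ)
  else 2 * (((l - k + 2) / 3 : ℕ) : ℤ)

def ddeg (l k₀ k₁ a₁ a₂ a₃ : ℕ) : ℤ :=
  -1 + ((k₀ + k₁ : ℕ) : ℤ) + (if l = 0 then ((a₁ + a₂ + a₃ : ℕ) : ℤ) else 0) + fB l k₁ + l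

lemma lbd_Ffac (y : NL → H) (l k : ℕ) : lbd (Ffac H y l k) (fB l k) := by
  unfold Ffac fB
  split_ifs with hlk hc
  · -- l ≤ k, divisible, q ≥ 1
    obtain ⟨hdvd, hq⟩ := hc
    rw [show (k - l) / 3 = ((k - l) / 3 - 1) + 1 from by omega, Finset.prod_range_succ]
    have hcast : ((k : ℚ)) - l = ((k - l : ℕ) : ℚ) := by
      rw [Nat.cast_sub hlk]
    have hlast : ((l : ℚ) - ↑k) / 3 + ((((k - l) / 3 - 1 : ℕ) : ℚ) + 1) = 0 := by
      have h1 : ((k : ℚ)) - l = 3 * ((((k - l) / 3 : ℕ)) : ℚ) := by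
        rw [hcast]
        exact_mod_cast congrArg (Nat.cast : ℕ → ℚ) hdvd
      have h2 : ((((k - l) / 3 - 1 : ℕ)) : ℚ) = ((((k - l) / 3 : ℕ)) : ℚ) - 1 := by
        rw [Nat.cast_sub hq]; norm_num
      rw [h2]; linarith
    rw [hlast]
    have hlastf : lbd ((HahnSeries.C (y b₁) + (0 : ℚ) • zz H) *
        (HahnSeries.C (y b₂) + (0 : ℚ) • zz H)) 0 := by
      simp only [zero_smul, add_zero]
      exact lbd_mono (by norm_num) (lbd_mul (lbd_C _) (lbd_C _))
    have hprod := lbd_prod (Finset.range ((k - l) / 3 - 1))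
      (fun j => (HahnSeries.C (y b₁) + ((((l : ℚ) - (k : ℚ)) / 3) + ((j : ℚ) + 1)) • zz H) *
        (HahnSeries.C (y b₂) + ((((l : ℚ) - (k : ℚ)) / 3) + ((j : ℚ) + 1)) • zz H))
      (fun _ => (-2 : ℤ))
      (fun j _ => lbd_mono (by norm_num) (lbd_mul (lbd_linfac (y b₁) _) (lbd_linfac (y b₂) _)))
    have htot := lbd_mul hprod hlastf
    apply lbd_mono _ htot
    simp only [Finset.sum_const, Finset.card_range, nsmul_eq_mul]
    push_cast
    omega
  · -- l ≤ k, general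
    have hprod := lbd_prod (Finset.range ((k - l) / 3))
      (fun j => (HahnSeries.C (y b₁) + ((((l : ℚ) - (k : ℚ)) / 3) + ((j : ℚ) + 1)) • zz H) *
        (HahnSeries.C (y b₂) + ((((l : ℚ) - (k : ℚ)) / 3) + ((j : ℚ) + 1)) • zz H))
      (fun _ => (-2 : ℤ))
      (fun j _ => lbd_mono (by norm_num) (lbd_mul (lbd_linfac (y b₁) _) (lbd_linfac (y b₂) _)))
    apply lbd_mono _ hprod
    simp only [Finset.sum_const, Finset.card_range, nsmul_eq_mul]
    push_cast
    omega
  · -- l > k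
    have hprod := lbd_prod (Finset.range ((l - k + 2) / 3))
      (fun j => Ring.inverse
        ((HahnSeries.C (y b₁) + ((((l : ℚ) - (k : ℚ)) / 3) - (j : ℚ)) • zz H) *
          (HahnSeries.C (y b₂) + ((((l : ℚ) - (k : ℚ)) / 3) - (j : ℚ)) • zz H)))
      (fun _ => (2 : ℤ))
      (fun j hj => ?_)
    · apply lbd_mono _ hprod
      simp only [Finset.sum_const, Finset.card_range, nsmul_eq_mul]
      push_cast
      omega
    · have hjlt : 3 * j < l - k := by
        rw [Finset.mem_range] at hj
        omega
      apply lbd_inverse_quad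
      intro hc0
      have h1 : (l : ℚ) - k = 3 * j := by linarith
      have h2 : (l : ℤ) - k = 3 * j := by exact_mod_cast h1
      omega

lemma lbd_base (u : H) (n a : ℕ) :
    lbd ((HahnSeries.C u * zinv H + (n : LaurentSeries H)) ^ a)
      (if n = 0 then (a : ℤ) else 0) := by
  have hb : lbd (HahnSeries.C u * zinv H + (n : LaurentSeries H))
      (if n = 0 then 1 else 0) := by
    rcases Nat.eq_zero_or_pos n with rfl | hn
    · rw [if_pos rfl, Nat.cast_zero]
      exact lbd_add (lbd_mono (by norm_num) (lbd_mul (lbd_C u) lbd_zinv)) (lbd_zero 1)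
    · rw [if_neg hn.ne']
      exact lbd_add (lbd_mono (by norm_num) (lbd_mul (lbd_C u) lbd_zinv)) (lbd_natCast n)
  apply lbd_mono _ (lbd_pow a hb)
  split_ifs <;> simp

lemma lbd_Ifun (y : NL → H) (m : Fin 6 →₀ ℕ) :
    lbd (Ifun H y m) (ddeg (m 0) (m 1) (m 2) (m 3) (m 4) (m 5)) := by
  simp only [Ifun]
  have hzpow : lbd (zinv H ^ (m 1 + m 2)) (((m 1 + m 2 : ℕ)) : ℤ) := by
    apply lbd_mono _ (lbd_pow (m 1 + m 2) lbd_zinv)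
    simp
  have hinvprod : lbd (∏ j ∈ Finset.range (m 0),
      Ring.inverse ((HahnSeries.C (y b₃) : LaurentSeries H) + ((j : ℚ) + 1) • zz H))
      ((m 0 : ℕ) : ℤ) := by
    apply lbd_mono _ (lbd_prod (Finset.range (m 0))
      (fun j => Ring.inverse ((HahnSeries.C (y b₃) : LaurentSeries H) + ((j : ℚ) + 1) • zz H))
      (fun _ => (1 : ℤ))
      (fun j _ => lbd_inverse_linear (y b₃) ((j : ℚ) + 1) (by positivity)))
    simp
  apply lbd_mono _ (lbd_mul (lbd_mul (lbd_mul (lbd_mul (lbd_mul (lbd_mul (lbd_mul (lbd_mul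
    (lbd_algebraMap _) lbd_zz) hzpow) (lbd_base (y b₁) (m 0) (m 3)))
    (lbd_base (y b₂) (m 0) (m 4))) (lbd_base (y b₃) (3 * m 0) (m 5)))
    (lbd_Ffac y (m 0) (m 2))) hinvprod) (lbd_C _))
  unfold ddeg
  generalize fB (m 0) (m 2) = F
  split_ifs <;> push_cast <;> omega

lemma ddeg_ge (l k₀ k₁ a₁ a₂ a₃ : ℕ) : (-1 : ℤ) ≤ ddeg l k₀ k₁ a₁ a₂ a₃ := by
  simp only [ddeg, fB]; split_ifs <;> omega

lemma ddeg_neg (l k₀ k₁ a₁ a₂ a₃ : ℕ) (h : ddeg l k₀ k₁ a₁ a₂ a₃ ≤ -1) :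
    l = 0 ∧ k₀ + k₁ + a₁ + a₂ + a₃ = 0 := by
  simp only [ddeg, fB] at h; split_ifs at h <;> omega

lemma ddeg_zero (l k₀ k₁ a₁ a₂ a₃ : ℕ) (h : ddeg l k₀ k₁ a₁ a₂ a₃ ≤ 0) :
    l = 0 ∧ k₀ + k₁ + a₁ + a₂ + a₃ ≤ 1 := by
  simp only [ddeg, fB] at h; split_ifs at h <;> omega

lemma profile_cases (k₀ k₁ a₁ a₂ a₃ : ℕ) (h : k₀ + k₁ + a₁ + a₂ + a₃ ≤ 1) :
      (k₀ = 0 ∧ k₁ = 0 ∧ a₁ = 0 ∧ a₂ = 0 ∧ a₃ = 0) ∨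
      (k₀ = 1 ∧ k₁ = 0 ∧ a₁ = 0 ∧ a₂ = 0 ∧ a₃ = 0) ∨
      (k₀ = 0 ∧ k₁ = 1 ∧ a₁ = 0 ∧ a₂ = 0 ∧ a₃ = 0) ∨
      (k₀ = 0 ∧ k₁ = 0 ∧ a₁ = 1 ∧ a₂ = 0 ∧ a₃ = 0) ∨
      (k₀ = 0 ∧ k₁ = 0 ∧ a₁ = 0 ∧ a₂ = 1 ∧ a₃ = 0) ∨
      (k₀ = 0 ∧ k₁ = 0 ∧ a₁ = 0 ∧ a₂ = 0 ∧ a₃ = 1) := by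
  have h0 : k₀ ≤ 1 := by omega
  have h1 : k₁ ≤ 1 := by omega
  have h2 : a₁ ≤ 1 := by omega
  have h3 : a₂ ≤ 1 := by omega
  have h4 : a₃ ≤ 1 := by omega
  interval_cases k₀ <;> interval_cases k₁ <;> interval_cases a₁ <;>
    interval_cases a₂ <;> interval_cases a₃ <;> simp_all

variable (y : NL → H)

lemma Ifun_val0 (m : Fin 6 →₀ ℕ) (h0 : m 0 = 0) (h1 : m 1 = 0) (h2 : m 2 = 0)
    (h3 : m 3 = 0) (h4 : m 4 = 0) (h5 : m 5 = 0) :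
    Ifun H y m = HahnSeries.single (-1 : ℤ) (y 0) := by
  simp only [Ifun, h0, h1, h2, h3, h4, h5]
  norm_num [Ffac, cElt, Nat.factorial, zz, zinv, HahnSeries.single_mul_single]

lemma Ifun_valk0 (m : Fin 6 →₀ ℕ) (h0 : m 0 = 0) (h1 : m 1 = 1) (h2 : m 2 = 0)
    (h3 : m 3 = 0) (h4 : m 4 = 0) (h5 : m 5 = 0) :
    Ifun H y m = HahnSeries.single (0 : ℤ) (y 0) := by
  simp only [Ifun, h0, h1, h2, h3, h4, h5]
  norm_num [Ffac, cElt, Nat.factorial, zz, zinv, HahnSeries.single_mul_single]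

lemma Ifun_valk1 (m : Fin 6 →₀ ℕ) (h0 : m 0 = 0) (h1 : m 1 = 0) (h2 : m 2 = 1)
    (h3 : m 3 = 0) (h4 : m 4 = 0) (h5 : m 5 = 0) :
    Ifun H y m = HahnSeries.single (0 : ℤ) (y bT) := by
  simp only [Ifun, h0, h1, h2, h3, h4, h5]
  norm_num [Ffac, cElt, Nat.factorial, zz, zinv, HahnSeries.single_mul_single]

lemma Ifun_vala1 (m : Fin 6 →₀ ℕ) (h0 : m 0 = 0) (h1 : m 1 = 0) (h2 : m 2 = 0)
    (h3 : m 3 = 1) (h4 : m 4 = 0) (h5 : m 5 = 0) :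
    Ifun H y m = HahnSeries.single (0 : ℤ) (y b₁ * y 0) := by
  simp only [Ifun, h0, h1, h2, h3, h4, h5]
  norm_num [Ffac, cElt, Nat.factorial, zz, zinv, HahnSeries.single_mul_single]

lemma Ifun_vala2 (m : Fin 6 →₀ ℕ) (h0 : m 0 = 0) (h1 : m 1 = 0) (h2 : m 2 = 0)
    (h3 : m 3 = 0) (h4 : m 4 = 1) (h5 : m 5 = 0) :
    Ifun H y m = HahnSeries.single (0 : ℤ) (y b₂ * y 0) := by
  simp only [Ifun, h0, h1, h2, h3, h4, h5]
  norm_num [Ffac, cElt, Nat.factorial, zz, zinv, HahnSeries.single_mul_single]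

lemma Ifun_vala3 (m : Fin 6 →₀ ℕ) (h0 : m 0 = 0) (h1 : m 1 = 0) (h2 : m 2 = 0)
    (h3 : m 3 = 0) (h4 : m 4 = 0) (h5 : m 5 = 1) :
    Ifun H y m = HahnSeries.single (0 : ℤ) (y b₃ * y 0) := by
  simp only [Ifun, h0, h1, h2, h3, h4, h5]
  norm_num [Ffac, cElt, Nat.factorial, zz, zinv, HahnSeries.single_mul_single]

end IAux

/-- Let `H` be the ℚ-algebra which is free as a ℚ-module on the basis `{y_b : b ∈ N}`,
`N = ℤ² + ℤ(1/3,1/3)`, with bilinear multiplication `y_b · y_{b'} = y_{b+b'}` if `b, b'`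
lie in a common one of the three cones `C₁₂, C₂₃, C₁₃` and `y_b · y_{b'} = 0` otherwise
(hypothesised via `hli`, `hspan`, `hmul`, `hmul'`).  Then for the `I`-function `I` of
`ℙ(1,1,3)`: the coefficient of `z^k` in `I` vanishes for every `k ≥ 2`, the coefficient of
`z¹` equals `1 = y_{(0,0)}`, and the coefficient of `z⁰` equals
`t₁u₁ + t₂u₂ + t₃u₃ + x₀ + x₁ y_{(1/3,1/3)}`. -/
theorem statement14 (y : NL → H)
    (hli : LinearIndependent ℚ y)
    (hspan : Submodule.span ℚ (Set.range y) = ⊤)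
    (hmul : ∀ b b' : NL, (∃ σ ∈ cones, (b : ℚ × ℚ) ∈ σ ∧ (b' : ℚ × ℚ) ∈ σ) →
      y b * y b' = y (b + b'))
    (hmul' : ∀ b b' : NL, ¬ (∃ σ ∈ cones, (b : ℚ × ℚ) ∈ σ ∧ (b' : ℚ × ℚ) ∈ σ) →
      y b * y b' = 0) :
    (∀ k : ℤ, 2 ≤ k → zCoeff H (Ifun H y) k = 0) ∧
    zCoeff H (Ifun H y) 1 = 1 ∧ (1 : H) = y 0 ∧
    zCoeff H (Ifun H y) 0 =
      MvPowerSeries.X 3 * MvPowerSeries.C (y b₁) +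
        MvPowerSeries.X 4 * MvPowerSeries.C (y b₂) +
        MvPowerSeries.X 5 * MvPowerSeries.C (y b₃) +
        MvPowerSeries.X 1 +
        MvPowerSeries.X 2 * MvPowerSeries.C (y bT) := by
  classical
  -- every cone contains 0
  have hzero_mem : ∀ σ ∈ cones, (0 : ℚ × ℚ) ∈ σ := by
    intro σ hσ
    simp only [cones, Set.mem_insert_iff, Set.mem_singleton_iff] at hσ
    rcases hσ with rfl | rfl | rfl <;>
      exact ⟨0, 0, le_rfl, le_rfl, by simp⟩
  -- the cones cover the plane
  have hcov : ∀ p : ℚ × ℚ, ∃ σ ∈ cones, p ∈ σ := by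
    intro p
    rcases le_or_gt 0 p.1 with h1 | h1 <;> rcases le_or_gt 0 p.2 with h2 | h2
    · refine ⟨cone2 ((1 : ℚ), (0 : ℚ)) ((0 : ℚ), (1 : ℚ)), by simp [cones],
        ⟨p.1, p.2, h1, h2, ?_⟩⟩
      simp only [Prod.ext_iff, Prod.smul_fst, Prod.smul_snd, Prod.fst_add, Prod.snd_add,
        smul_eq_mul]
      constructor <;> ring
    · refine ⟨cone2 ((-1 : ℚ), (-1 : ℚ)) ((1 : ℚ), (0 : ℚ)), by simp [cones],
        ⟨-p.2, p.1 - p.2, by linarith, by linarith, ?_⟩⟩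
      simp only [Prod.ext_iff, Prod.smul_fst, Prod.smul_snd, Prod.fst_add, Prod.snd_add,
        smul_eq_mul]
      constructor <;> ring
    · refine ⟨cone2 ((0 : ℚ), (1 : ℚ)) ((-1 : ℚ), (-1 : ℚ)), by simp [cones],
        ⟨p.2 - p.1, -p.1, by linarith, by linarith, ?_⟩⟩
      simp only [Prod.ext_iff, Prod.smul_fst, Prod.smul_snd, Prod.fst_add, Prod.snd_add,
        smul_eq_mul]
      constructor <;> ring
    · rcases le_total p.1 p.2 with hle | hle
      · refine ⟨cone2 ((0 : ℚ), (1 : ℚ)) ((-1 : ℚ), (-1 : ℚ)), by simp [cones],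
          ⟨p.2 - p.1, -p.1, by linarith, by linarith, ?_⟩⟩
        simp only [Prod.ext_iff, Prod.smul_fst, Prod.smul_snd, Prod.fst_add, Prod.snd_add,
          smul_eq_mul]
        constructor <;> ring
      · refine ⟨cone2 ((-1 : ℚ), (-1 : ℚ)) ((1 : ℚ), (0 : ℚ)), by simp [cones],
          ⟨-p.2, p.1 - p.2, by linarith, by linarith, ?_⟩⟩
        simp only [Prod.ext_iff, Prod.smul_fst, Prod.smul_snd, Prod.fst_add, Prod.snd_add,
          smul_eq_mul]
        constructor <;> ring
  have hone : ∀ b : NL, y b * y 0 = y b := by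
    intro b
    obtain ⟨σ, hσ, hb⟩ := hcov (b : ℚ × ℚ)
    have h0 : ((0 : NL) : ℚ × ℚ) ∈ σ := hzero_mem σ hσ
    rw [hmul b 0 ⟨σ, hσ, hb, h0⟩, add_zero]
  have hy0 : (1 : H) = y 0 := by
    have hx : ∀ x : H, x * y 0 = x := by
      intro x
      have hx' : x ∈ Submodule.span ℚ (Set.range y) := by rw [hspan]; trivial
      induction hx' using Submodule.span_induction with
      | mem x h => obtain ⟨b, rfl⟩ := h; exact hone b
      | zero => rw [zero_mul]
      | add a b _ _ ha hb => rw [add_mul, ha, hb]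
      | smul r a _ ha => rw [smul_mul_assoc, ha]
    rw [← hx 1, one_mul]
  refine ⟨?_, ?_, hy0, ?_⟩
  · -- z^k, k ≥ 2
    intro k hk
    apply MvPowerSeries.ext
    intro m
    rw [map_zero]
    rw [MvPowerSeries.coeff_apply]
    simp only [zCoeff]
    rw [MvPowerSeries.coeff_apply]
    refine IAux.lbd_Ifun y m (-k) ?_
    have := IAux.ddeg_ge (m 0) (m 1) (m 2) (m 3) (m 4) (m 5)
    omega
  · -- z^1
    apply MvPowerSeries.ext
    intro m
    rw [MvPowerSeries.coeff_one, MvPowerSeries.coeff_apply]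
    simp only [zCoeff]
    rw [MvPowerSeries.coeff_apply]
    by_cases hm : m = 0
    · subst hm
      rw [if_pos rfl, IAux.Ifun_val0 y 0 rfl rfl rfl rfl rfl rfl]
      rw [show -(1 : ℤ) = -1 from rfl, HahnSeries.coeff_single_same, ← hy0]
    · rw [if_neg hm]
      rcases lt_or_ge (-1 : ℤ) (IAux.ddeg (m 0) (m 1) (m 2) (m 3) (m 4) (m 5)) with h | h
      · exact IAux.lbd_Ifun y m (-1) h
      · exfalso
        obtain ⟨hl, hsum⟩ := IAux.ddeg_neg _ _ _ _ _ _ h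
        apply hm
        have e1 : m 1 = 0 := by omega
        have e2 : m 2 = 0 := by omega
        have e3 : m 3 = 0 := by omega
        have e4 : m 4 = 0 := by omega
        have e5 : m 5 = 0 := by omega
        ext i
        fin_cases i
        exacts [hl, e1, e2, e3, e4, e5]
  · -- z^0
    apply MvPowerSeries.ext
    intro m
    rw [map_add, map_add, map_add, map_add,
      MvPowerSeries.coeff_mul_C, MvPowerSeries.coeff_mul_C, MvPowerSeries.coeff_mul_C,
      MvPowerSeries.coeff_mul_C,
      MvPowerSeries.coeff_X, MvPowerSeries.coeff_X, MvPowerSeries.coeff_X,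
      MvPowerSeries.coeff_X, MvPowerSeries.coeff_X]
    rw [MvPowerSeries.coeff_apply]
    simp only [zCoeff]
    rw [MvPowerSeries.coeff_apply, neg_zero]
    have hni : ∀ (i : Fin 6), m i = 0 → m ≠ Finsupp.single i 1 := by
      intro i hmi he
      rw [he] at hmi
      simp [Finsupp.single_apply] at hmi
    rcases lt_or_ge (0 : ℤ) (IAux.ddeg (m 0) (m 1) (m 2) (m 3) (m 4) (m 5)) with h | h
    · rw [IAux.lbd_Ifun y m 0 h]
      have h1 : m ≠ Finsupp.single 1 1 := by
        rintro rfl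
        simp [IAux.ddeg, IAux.fB, Finsupp.single_apply] at h
      have h2 : m ≠ Finsupp.single 2 1 := by
        rintro rfl
        simp [IAux.ddeg, IAux.fB, Finsupp.single_apply] at h
      have h3 : m ≠ Finsupp.single 3 1 := by
        rintro rfl
        simp [IAux.ddeg, IAux.fB, Finsupp.single_apply] at h
      have h4 : m ≠ Finsupp.single 4 1 := by
        rintro rfl
        simp [IAux.ddeg, IAux.fB, Finsupp.single_apply] at h
      have h5 : m ≠ Finsupp.single 5 1 := by
        rintro rfl
        simp [IAux.ddeg, IAux.fB, Finsupp.single_apply] at h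
      rw [if_neg h1, if_neg h2, if_neg h3, if_neg h4, if_neg h5]
      ring
    · obtain ⟨hl, hsum⟩ := IAux.ddeg_zero _ _ _ _ _ _ h
      have heq : ∀ (i : Fin 6), m 0 = 0 → m 1 = (Finsupp.single i (1:ℕ)) 1 →
          m 2 = (Finsupp.single i (1:ℕ)) 2 → m 3 = (Finsupp.single i (1:ℕ)) 3 →
          m 4 = (Finsupp.single i (1:ℕ)) 4 → m 5 = (Finsupp.single i (1:ℕ)) 5 →
          (Finsupp.single i (1:ℕ)) 0 = 0 → m = Finsupp.single i 1 := by
        intro i g0 g1 g2 g3 g4 g5 g6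
        ext j
        fin_cases j
        exacts [g0.trans g6.symm, g1, g2, g3, g4, g5]
      rcases IAux.profile_cases _ _ _ _ _ hsum with
        ⟨e1, e2, e3, e4, e5⟩ | ⟨e1, e2, e3, e4, e5⟩ | ⟨e1, e2, e3, e4, e5⟩ |
        ⟨e1, e2, e3, e4, e5⟩ | ⟨e1, e2, e3, e4, e5⟩ | ⟨e1, e2, e3, e4, e5⟩
      · -- m = 0
        rw [IAux.Ifun_val0 y m hl e1 e2 e3 e4 e5,
          HahnSeries.coeff_single_of_ne (by norm_num)]
        rw [if_neg (hni 1 e1), if_neg (hni 2 e2), if_neg (hni 3 e3), if_neg (hni 4 e4),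
          if_neg (hni 5 e5)]
        ring
      · -- k₀ = 1 : the x₀ term
        rw [IAux.Ifun_valk0 y m hl e1 e2 e3 e4 e5, HahnSeries.coeff_single_same]
        rw [if_pos (heq 1 hl (by simp [Finsupp.single_apply, e1])
            (by simp [Finsupp.single_apply, e2]) (by simp [Finsupp.single_apply, e3])
            (by simp [Finsupp.single_apply, e4]) (by simp [Finsupp.single_apply, e5])
            (by simp [Finsupp.single_apply]))]
        rw [if_neg (hni 2 e2), if_neg (hni 3 e3), if_neg (hni 4 e4), if_neg (hni 5 e5)]
        rw [← hy0]
        ring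
      · -- k₁ = 1 : the x₁ term
        rw [IAux.Ifun_valk1 y m hl e1 e2 e3 e4 e5, HahnSeries.coeff_single_same]
        rw [if_pos (heq 2 hl (by simp [Finsupp.single_apply, e1])
            (by simp [Finsupp.single_apply, e2]) (by simp [Finsupp.single_apply, e3])
            (by simp [Finsupp.single_apply, e4]) (by simp [Finsupp.single_apply, e5])
            (by simp [Finsupp.single_apply]))]
        rw [if_neg (hni 1 e1), if_neg (hni 3 e3), if_neg (hni 4 e4), if_neg (hni 5 e5)]
        ring
      · -- a₁ = 1 : the t₁ u₁ term
        rw [IAux.Ifun_vala1 y m hl e1 e2 e3 e4 e5, HahnSeries.coeff_single_same]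
        rw [if_pos (heq 3 hl (by simp [Finsupp.single_apply, e1])
            (by simp [Finsupp.single_apply, e2]) (by simp [Finsupp.single_apply, e3])
            (by simp [Finsupp.single_apply, e4]) (by simp [Finsupp.single_apply, e5])
            (by simp [Finsupp.single_apply]))]
        rw [if_neg (hni 1 e1), if_neg (hni 2 e2), if_neg (hni 4 e4), if_neg (hni 5 e5)]
        rw [hone b₁]
        ring
      · -- a₂ = 1
        rw [IAux.Ifun_vala2 y m hl e1 e2 e3 e4 e5, HahnSeries.coeff_single_same]
        rw [if_pos (heq 4 hl (by simp [Finsupp.single_apply, e1])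
            (by simp [Finsupp.single_apply, e2]) (by simp [Finsupp.single_apply, e3])
            (by simp [Finsupp.single_apply, e4]) (by simp [Finsupp.single_apply, e5])
            (by simp [Finsupp.single_apply]))]
        rw [if_neg (hni 1 e1), if_neg (hni 2 e2), if_neg (hni 3 e3), if_neg (hni 5 e5)]
        rw [hone b₂]
        ring
      · -- a₃ = 1
        rw [IAux.Ifun_vala3 y m hl e1 e2 e3 e4 e5, HahnSeries.coeff_single_same]
        rw [if_pos (heq 5 hl (by simp [Finsupp.single_apply, e1])
            (by simp [Finsupp.single_apply, e2]) (by simp [Finsupp.single_apply, e3])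
            (by simp [Finsupp.single_apply, e4]) (by simp [Finsupp.single_apply, e5])
            (by simp [Finsupp.single_apply]))]
        rw [if_neg (hni 1 e1), if_neg (hni 2 e2), if_neg (hni 3 e3), if_neg (hni 4 e4)]
        rw [hone b₃]
        ring

end
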